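/- arXiv:1506.03174 — 4 statements merged into one kernel-verified Lean document; each statement's English description precedes it below -/
import Mathlib

section
/- Let Ξ = x_1 * x_2 * ··· * x_n be the Baker–Campbell–Hausdorff product in T_{\ge 1}, so that e^Ξ = e^{x_1}···e^{x_n}. Let Y^{-1} denote the ⋄-inverse of Y := -Ξ^{-1} + x_0 s(Ξ) x_0 (inverses with respect to ⋄, unit x_0). Then Y^{-1} = -1 + e^{-Ξ} = -1 + e^{-x_n}···e^{-x_1}; equivalently (−1 + e^{−Ξ}) ⋄ Y = x_0. -/
/-- Words in the generators `x_1, …, x_n` (indexed by `Fin n`). -/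
abbrev Word (n : ℕ) := List (Fin n)

/-- The completed tensor algebra `T = ∏ₘ H^{⊗m}` on the basis `x_1, …, x_n` of `H`,
modeled as the space of ℚ-valued coefficient functions on words in the generators. -/
abbrev T (n : ℕ) : Type := Word n → ℚ

/-- The generator `x_k` as an element of `T n`. -/
def xgen {n : ℕ} (k : Fin n) : T n := fun w => if w = [k] then 1 else 0

/-- `x₀ = -∑ₖ xₖ`. -/
def x0 (n : ℕ) : T n := -∑ k : Fin n, xgen k

/-- The operation `⋄` on `T_{≥1}`, determined on monomials by
`(x_{i_1}⋯x_{i_{l-1}}x_{i_l}) ⋄ (x_{j_1}x_{j_2}⋯x_{j_m})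
  = -δ_{i_l j_1} x_{i_1}⋯x_{i_{l-1}} x_{j_1}x_{j_2}⋯x_{j_m}`,
extended bilinearly and continuously. -/
def dia {n : ℕ} (f g : T n) : T n :=
  fun w => -∑ i ∈ Finset.range w.length, f (w.take (i + 1)) * g (w.drop i)

/-- `f ∈ T_{≥p}`: all components of degree `< p` vanish. -/
def degGE {n : ℕ} (p : ℕ) (f : T n) : Prop := ∀ w : Word n, w.length < p → f w = 0

/-- The unit `1 ∈ T n` for the tensor product. -/
def oneT {n : ℕ} : T n := fun w => if w = [] then 1 else 0

/-- The (completed) tensor product on `T n`: concatenation product. -/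
def mulT {n : ℕ} (f g : T n) : T n :=
  fun w => ∑ i ∈ Finset.range (w.length + 1), f (w.take i) * g (w.drop i)

/-- Powers with respect to the tensor product. -/
def powT {n : ℕ} (f : T n) : ℕ → T n
  | 0 => oneT
  | m + 1 => mulT f (powT f m)

/-- Ordered product of a list of elements of `T n`. -/
def prodT {n : ℕ} : List (T n) → T n
  | [] => oneT
  | a :: l => mulT a (prodT l)

/-- Substitution of an element `a ∈ T_{≥1}` into a formal power series `F ∈ ℚ[[z]]`:
`F(a) = ∑ₘ (coeff m F) aᵐ`, a finite sum in each degree. -/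
noncomputable def substT {n : ℕ} (F : PowerSeries ℚ) (a : T n) : T n :=
  fun w => ∑ m ∈ Finset.range (w.length + 1), PowerSeries.coeff m F * powT a m w

/-- The exponential `e^a` for `a ∈ T_{≥1}`. -/
noncomputable def expT {n : ℕ} (a : T n) : T n := substT (PowerSeries.exp ℚ) a

/-- The power series `log(1+z) = ∑_{m≥1} (-1)^{m+1} zᵐ/m`. -/
def logSeries : PowerSeries ℚ :=
  PowerSeries.mk fun m => if m = 0 then 0 else (-1 : ℚ) ^ (m + 1) / (m : ℚ)

/-- The logarithm `log a` for `a ∈ 1 + T_{≥1}`. -/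
noncomputable def logT {n : ℕ} (a : T n) : T n := substT logSeries (a - oneT)

/-- The Baker–Campbell–Hausdorff product `Ξ = x₁ * x₂ * ⋯ * xₙ = log(e^{x₁}e^{x₂}⋯e^{xₙ})`. -/
noncomputable def Xi (n : ℕ) : T n := logT (prodT ((List.finRange n).map fun k => expT (xgen k)))

/-- The continuous algebra automorphism `Q` of `T n` with `Q(x_k) = -x_{n-k+1}`
(reversing and negating the basis). -/
def Qauto {n : ℕ} (f : T n) : T n := fun w => (-1 : ℚ) ^ w.length * f (w.map Fin.rev)

/-- `s(z) = 1/(e^{-z}-1) + 1/z` is characterized in `ℚ[[z]]` by the equation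
`s(z) · (z·(e^{-z}-1)) = z + (e^{-z}-1)`. -/
def sSpec (s : PowerSeries ℚ) : Prop :=
  s * (PowerSeries.X * (PowerSeries.rescale (-1) (PowerSeries.exp ℚ) - 1)) =
    PowerSeries.X + (PowerSeries.rescale (-1) (PowerSeries.exp ℚ) - 1)

/-- `g(z) = z/(e^{-z}-1)` is characterized in `ℚ[[z]]` by `g(z)·(e^{-z}-1) = z`. -/
def gSpec (g : PowerSeries ℚ) : Prop :=
  g * (PowerSeries.rescale (-1) (PowerSeries.exp ℚ) - 1) = PowerSeries.X

lemma tri_sum {M : Type*} [AddCommMonoid M] (N : ℕ) (F : ℕ → ℕ → M) :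
    ∑ j ∈ Finset.range N, ∑ i ∈ Finset.range (j+1), F i j
      = ∑ i ∈ Finset.range N, ∑ k ∈ Finset.range (N - i), F i (i + k) := by
  induction N with
  | zero => simp
  | succ N ih =>
    rw [Finset.sum_range_succ, ih]
    conv_rhs => rw [Finset.sum_range_succ]
    have h1 : ∀ i ∈ Finset.range N, ∑ k ∈ Finset.range (N + 1 - i), F i (i+k)
        = (∑ k ∈ Finset.range (N - i), F i (i+k)) + F i N := by
      intro i hi
      rw [Finset.mem_range] at hi
      rw [show N + 1 - i = (N - i) + 1 by omega, Finset.sum_range_succ,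
        show i + (N - i) = N by omega]
    rw [Finset.sum_congr rfl h1, Finset.sum_add_distrib,
      show N + 1 - N = 1 by omega, Finset.sum_range_one, Nat.add_zero]
    conv_lhs => rw [Finset.sum_range_succ (fun i => F i N)]
    abel

lemma square_sum_antidiag {M : Type*} [AddCommMonoid M] (N : ℕ) (H : ℕ → ℕ → M)
    (hH : ∀ p q, N < p + q → H p q = 0) :
    ∑ p ∈ Finset.range (N+1), ∑ q ∈ Finset.range (N+1), H p q
      = ∑ m ∈ Finset.range (N+1), ∑ ij ∈ Finset.HasAntidiagonal.antidiagonal m, H ij.1 ij.2 := by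
  have h1 : ∀ m, ∑ ij ∈ Finset.HasAntidiagonal.antidiagonal m, H ij.1 ij.2
      = ∑ i ∈ Finset.range (m+1), H i (m - i) :=
    fun m => Finset.Nat.sum_antidiagonal_eq_sum_range_succ_mk _ m
  simp_rw [h1]
  rw [tri_sum (N+1) (fun i m => H i (m - i))]
  refine Finset.sum_congr rfl fun i hi => ?_
  rw [Finset.mem_range] at hi
  rw [← Finset.sum_subset (Finset.range_subset_range.2 (by omega : N + 1 - i ≤ N + 1))
    (fun q _ hq => hH i q (by simp only [Finset.mem_range] at hq ⊢; omega))]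
  refine Finset.sum_congr rfl fun k _ => by rw [Nat.add_sub_cancel_left]

section Tlemmas
variable {n : ℕ}

lemma x0_apply (v : Word n) : x0 n v = if v.length = 1 then -1 else 0 := by
  unfold x0 xgen
  rcases v with _ | ⟨a, _ | ⟨b, t⟩⟩ <;>
    simp [Finset.sum_apply, Finset.sum_ite_eq', List.cons.injEq]

lemma mulT_apply_nil (f g : T n) : mulT f g [] = f [] * g [] := by
  simp [mulT]

lemma mulT_one (f : T n) : mulT f oneT = f := by
  funext w
  unfold mulT oneT
  rw [Finset.sum_eq_single w.length]
  · rw [List.take_length, List.drop_length]; simp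
  · intro i hi hne
    rw [Finset.mem_range] at hi
    have hd : ¬ (w.drop i = []) := by
      intro h
      have := congrArg List.length h
      simp only [List.length_drop, List.length_nil] at this
      omega
    rw [if_neg hd, mul_zero]
  · intro h; exact absurd (Finset.self_mem_range_succ _) h

lemma one_mulT (f : T n) : mulT oneT f = f := by
  funext w
  unfold mulT oneT
  rw [Finset.sum_eq_single 0]
  · simp
  · intro i hi hne
    rw [if_neg (by
      intro h
      have := congrArg List.length h
      rw [List.length_take] at this
      simp only [List.length_nil] at this
      rw [Finset.mem_range] at hi
      exact hne (by omega)), zero_mul]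
  · intro h; exact absurd (by simp : (0:ℕ) ∈ Finset.range (w.length + 1)) h

lemma mulT_assoc (f g h : T n) : mulT (mulT f g) h = mulT f (mulT g h) := by
  funext w
  unfold mulT
  set N := w.length with hN
  have hL : ∀ i ∈ Finset.range (N+1),
      (∑ j ∈ Finset.range ((w.take i).length + 1), f ((w.take i).take j) * g ((w.take i).drop j)) * h (w.drop i)
      = ∑ j ∈ Finset.range (i+1), f (w.take j) * g ((w.drop j).take (i - j)) * h (w.drop i) := by
    intro i hi
    rw [Finset.mem_range] at hi
    rw [List.length_take, min_eq_left (by omega), Finset.sum_mul]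
    refine Finset.sum_congr rfl fun j hj => ?_
    rw [Finset.mem_range] at hj
    rw [List.take_take, min_eq_left (by omega), List.drop_take]
  rw [Finset.sum_congr rfl hL, tri_sum (N+1)
    (fun j i => f (w.take j) * g ((w.drop j).take (i - j)) * h (w.drop i))]
  refine Finset.sum_congr rfl fun j hj => ?_
  rw [Finset.mem_range] at hj
  rw [List.length_drop, Finset.mul_sum, show N + 1 - j = (N - j) + 1 by omega]
  refine Finset.sum_congr rfl fun k hk => ?_
  rw [Nat.add_sub_cancel_left, List.drop_drop, mul_assoc, Nat.add_comm j k]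

end Tlemmas


section Dia
variable {n : ℕ}

lemma dia_add_left (f g h : T n) : dia (f + g) h = dia f h + dia g h := by
  funext w
  simp only [dia, Pi.add_apply, add_mul, Finset.sum_add_distrib, neg_add]

lemma dia_add_right (f g h : T n) : dia f (g + h) = dia f g + dia f h := by
  funext w
  simp only [dia, Pi.add_apply, mul_add, Finset.sum_add_distrib, neg_add]

lemma dia_sub_right (f g h : T n) : dia f (g - h) = dia f g - dia f h := by
  funext w
  simp only [dia, Pi.sub_apply, mul_sub, Finset.sum_sub_distrib]
  ring

lemma dia_sub_left (f g h : T n) : dia (f - g) h = dia f h - dia g h := by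
  funext w
  simp only [dia, Pi.sub_apply, sub_mul, Finset.sum_sub_distrib]
  ring

lemma dia_neg_left (f g : T n) : dia (-f) g = -dia f g := by
  funext w
  simp only [dia, Pi.neg_apply, neg_mul, Finset.sum_neg_distrib, neg_neg]

lemma dia_neg_right (f g : T n) : dia f (-g) = -dia f g := by
  funext w
  simp only [dia, Pi.neg_apply, mul_neg, Finset.sum_neg_distrib, neg_neg]

lemma dia_x0_left {g : T n} (hg : g [] = 0) : dia (x0 n) g = g := by
  funext w
  unfold dia
  rcases eq_or_ne w [] with rfl | hw
  · simpa using hg.symm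
  have hN : 0 < w.length := List.length_pos_iff.2 hw
  rw [Finset.sum_eq_single 0]
  · rw [x0_apply, List.length_take, show min (0+1) w.length = 1 by omega, if_pos rfl,
      List.drop_zero]
    ring
  · intro i hi hne
    rw [Finset.mem_range] at hi
    rw [x0_apply, List.length_take, if_neg (by omega), zero_mul]
  · intro h; exact absurd (Finset.mem_range.2 hN) h

lemma dia_x0_right {f : T n} (hf : f [] = 0) : dia f (x0 n) = f := by
  funext w
  unfold dia
  rcases eq_or_ne w [] with rfl | hw
  · simpa using hf.symm
  have hN : 0 < w.length := List.length_pos_iff.2 hw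
  rw [Finset.sum_eq_single (w.length - 1)]
  · rw [x0_apply, List.length_drop, show w.length - (w.length - 1) = 1 by omega, if_pos rfl,
      show w.length - 1 + 1 = w.length by omega, List.take_length]
    ring
  · intro i hi hne
    rw [Finset.mem_range] at hi
    rw [x0_apply, List.length_drop, if_neg (by omega), mul_zero]
  · intro h; exact absurd (Finset.mem_range.2 (by omega)) h

lemma dia_assoc (f g h : T n) : dia (dia f g) h = dia f (dia g h) := by
  funext w
  unfold dia
  set N := w.length with hN
  have hL : ∀ j ∈ Finset.range N,
      (-∑ i ∈ Finset.range ((w.take (j+1)).length),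
          f ((w.take (j+1)).take (i+1)) * g ((w.take (j+1)).drop i)) * h (w.drop j)
      = -∑ i ∈ Finset.range (j+1),
          f (w.take (i+1)) * (g ((w.drop i).take (j+1-i)) * h (w.drop j)) := by
    intro j hj
    rw [Finset.mem_range] at hj
    rw [List.length_take, min_eq_left (by omega), neg_mul, Finset.sum_mul]
    congr 1
    refine Finset.sum_congr rfl fun i hi => ?_
    rw [Finset.mem_range] at hi
    rw [List.take_take, min_eq_left (by omega), List.drop_take, mul_assoc]
  have hR : ∀ i ∈ Finset.range N,
      f (w.take (i+1)) * (-∑ k ∈ Finset.range ((w.drop i).length),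
          g ((w.drop i).take (k+1)) * h ((w.drop i).drop k))
      = -∑ k ∈ Finset.range (N - i),
          f (w.take (i+1)) * (g ((w.drop i).take (i+k+1-i)) * h (w.drop (i+k))) := by
    intro i hi
    rw [Finset.mem_range] at hi
    rw [List.length_drop, mul_neg, Finset.mul_sum]
    congr 1
    refine Finset.sum_congr rfl fun k hk => ?_
    rw [show i+k+1-i = k+1 by omega, List.drop_drop]
  rw [Finset.sum_congr rfl hL, Finset.sum_congr rfl hR]
  simp only [Finset.sum_neg_distrib, neg_neg]
  exact tri_sum N (fun i j => f (w.take (i+1)) * (g ((w.drop i).take (j+1-i)) * h (w.drop j)))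

lemma dia_mulx0_left (f g : T n) : dia (mulT f (x0 n)) g = mulT f g - g [] • f := by
  funext w
  rcases eq_or_ne w [] with rfl | hw
  · simp only [dia, List.length_nil, Finset.range_zero, Finset.sum_empty, neg_zero,
      Pi.sub_apply, Pi.smul_apply, smul_eq_mul, mulT, List.take_nil, List.drop_nil,
      Finset.sum_const, x0_apply]
    simp [x0_apply]
    ring
  have hN : 0 < w.length := List.length_pos_iff.2 hw
  have hm : ∀ i ∈ Finset.range w.length, mulT f (x0 n) (w.take (i+1)) = -f (w.take i) := by
    intro i hi
    rw [Finset.mem_range] at hi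
    unfold mulT
    rw [List.length_take, min_eq_left (by omega)]
    rw [Finset.sum_eq_single i]
    · rw [x0_apply, List.length_drop, List.length_take, min_eq_left (by omega),
        show i + 1 - i = 1 by omega, if_pos rfl, List.take_take, min_eq_left (by omega)]
      ring
    · intro t ht htne
      rw [Finset.mem_range] at ht
      rw [x0_apply, List.length_drop, List.length_take, min_eq_left (by omega),
        if_neg (by omega), mul_zero]
    · intro habs; exact absurd (Finset.mem_range.2 (by omega)) habs
  show dia (mulT f (x0 n)) g w = mulT f g w - g [] * f w
  unfold dia
  rw [Finset.sum_congr rfl (fun i hi => by rw [hm i hi])]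
  unfold mulT
  rw [Finset.sum_range_succ, List.take_length, List.drop_length]
  simp only [neg_mul, Finset.sum_neg_distrib, neg_neg]
  ring

lemma dia_mulx0_right (f g : T n) : dia f (mulT (x0 n) g) = mulT f g - f [] • g := by
  funext w
  rcases eq_or_ne w [] with rfl | hw
  · simp only [dia, List.length_nil, Finset.range_zero, Finset.sum_empty, neg_zero,
      Pi.sub_apply, Pi.smul_apply, smul_eq_mul, mulT, List.take_nil, List.drop_nil]
    simp [x0_apply]
  have hN : 0 < w.length := List.length_pos_iff.2 hw
  have hm : ∀ i ∈ Finset.range w.length, mulT (x0 n) g (w.drop i) = -g (w.drop (i+1)) := by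
    intro i hi
    rw [Finset.mem_range] at hi
    unfold mulT
    rw [List.length_drop]
    rw [Finset.sum_eq_single 1]
    · rw [x0_apply, List.length_take, List.length_drop, min_eq_left (by omega), if_pos rfl,
        List.drop_drop]
      ring
    · intro t ht htne
      rw [Finset.mem_range] at ht
      rw [x0_apply, List.length_take, List.length_drop, if_neg (by omega), zero_mul]
    · intro habs; exact absurd (Finset.mem_range.2 (by omega)) habs
  show dia f (mulT (x0 n) g) w = mulT f g w - f [] * g w
  unfold dia
  rw [Finset.sum_congr rfl (fun i hi => by rw [hm i hi])]
  unfold mulT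
  rw [Finset.sum_range_succ' (fun i => f (w.take i) * g (w.drop i))]
  simp only [mul_neg, Finset.sum_neg_distrib, neg_neg, List.take_zero, List.drop_zero]
  ring

end Dia

section PowSubst
variable {n : ℕ}

lemma mulT_smul_left (c : ℚ) (f g : T n) : mulT (c • f) g = c • mulT f g := by
  funext w
  simp only [mulT, Pi.smul_apply, smul_eq_mul, Finset.mul_sum]
  exact Finset.sum_congr rfl fun i _ => by ring

lemma mulT_smul_right (c : ℚ) (f g : T n) : mulT f (c • g) = c • mulT f g := by
  funext w
  simp only [mulT, Pi.smul_apply, smul_eq_mul, Finset.mul_sum]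
  exact Finset.sum_congr rfl fun i _ => by ring

lemma mulT_neg_right (f g : T n) : mulT f (-g) = -mulT f g := by
  funext w
  simp only [mulT, Pi.neg_apply, mul_neg, Finset.sum_neg_distrib]

lemma powT_eq_zero {a : T n} (ha : a [] = 0) :
    ∀ (m : ℕ) (w : Word n), w.length < m → powT a m w = 0 := by
  intro m
  induction m with
  | zero => intro w h; omega
  | succ m ih =>
    intro w h
    show mulT a (powT a m) w = 0
    unfold mulT
    apply Finset.sum_eq_zero
    intro i hi
    rw [Finset.mem_range] at hi
    rcases Nat.eq_zero_or_pos i with rfl | hip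
    · rw [List.take_zero, ha, zero_mul]
    · rw [ih (w.drop i) (by rw [List.length_drop]; omega), mul_zero]

lemma powT_add (a : T n) (p q : ℕ) : powT a (p + q) = mulT (powT a p) (powT a q) := by
  induction p with
  | zero => rw [Nat.zero_add]; exact (one_mulT _).symm
  | succ p ih =>
    rw [show p + 1 + q = (p + q) + 1 by omega]
    show mulT a (powT a (p+q)) = mulT (mulT a (powT a p)) (powT a q)
    rw [ih, mulT_assoc]

lemma powT_smul (c : ℚ) (a : T n) (m : ℕ) : powT (c • a) m = c ^ m • powT a m := by
  induction m with
  | zero => simp only [powT, pow_zero, one_smul]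
  | succ m ih =>
    show mulT (c • a) (powT (c • a) m) = c ^ (m+1) • mulT a (powT a m)
    rw [ih, mulT_smul_left, mulT_smul_right, smul_smul, show c * c ^ m = c ^ (m+1) by ring]

lemma substT_apply_nil (F : PowerSeries ℚ) (a : T n) :
    substT F a [] = PowerSeries.coeff 0 F := by
  simp [substT, powT, oneT]

lemma substT_add (F G : PowerSeries ℚ) (a : T n) :
    substT (F + G) a = substT F a + substT G a := by
  funext w
  simp only [substT, Pi.add_apply, map_add, add_mul, Finset.sum_add_distrib]

lemma substT_sub (F G : PowerSeries ℚ) (a : T n) :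
    substT (F - G) a = substT F a - substT G a := by
  funext w
  simp only [substT, Pi.sub_apply, map_sub, sub_mul, Finset.sum_sub_distrib]

lemma substT_one (a : T n) : substT 1 a = oneT := by
  funext w
  unfold substT
  rw [Finset.sum_eq_single 0]
  · rw [PowerSeries.coeff_one, if_pos rfl, one_mul]; rfl
  · intro m hm hne
    rw [PowerSeries.coeff_one, if_neg hne, zero_mul]
  · intro h; exact absurd (Finset.mem_range.2 (by omega)) h

lemma substT_X {a : T n} (ha : a [] = 0) : substT PowerSeries.X a = a := by
  funext w
  unfold substT
  rcases eq_or_ne w [] with rfl | hw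
  · simp only [List.length_nil, Nat.zero_add, Finset.sum_range_one, PowerSeries.coeff_zero_X,
      zero_mul, ha]
  have hN : 0 < w.length := List.length_pos_iff.2 hw
  rw [Finset.sum_eq_single 1]
  · rw [PowerSeries.coeff_one_X, one_mul]
    show mulT a oneT w = a w
    rw [mulT_one]
  · intro m hm hne
    rw [PowerSeries.coeff_X, if_neg hne, zero_mul]
  · intro h; exact absurd (Finset.mem_range.2 (by omega)) h

lemma substT_mul {a : T n} (ha : a [] = 0) (F G : PowerSeries ℚ) :
    substT (F * G) a = mulT (substT F a) (substT G a) := by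
  funext w
  set N := w.length with hNdef
  have h1 : ∀ i ∈ Finset.range (N+1), substT F a (w.take i)
      = ∑ m ∈ Finset.range (N+1), PowerSeries.coeff m F * powT a m (w.take i) := by
    intro i hi
    rw [Finset.mem_range] at hi
    unfold substT
    apply Finset.sum_subset
    · apply Finset.range_subset_range.2
      rw [List.length_take]
      omega
    · intro m hm hm'
      rw [Finset.mem_range, List.length_take] at hm'
      rw [powT_eq_zero ha m _ (by rw [List.length_take]; omega), mul_zero]
  have h2 : ∀ i ∈ Finset.range (N+1), substT G a (w.drop i)
      = ∑ m ∈ Finset.range (N+1), PowerSeries.coeff m G * powT a m (w.drop i) := by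
    intro i hi
    rw [Finset.mem_range] at hi
    unfold substT
    apply Finset.sum_subset
    · apply Finset.range_subset_range.2
      rw [List.length_drop]
      omega
    · intro m hm hm'
      rw [Finset.mem_range, List.length_drop] at hm'
      rw [powT_eq_zero ha m _ (by rw [List.length_drop]; omega), mul_zero]
  have hR : mulT (substT F a) (substT G a) w
      = ∑ p ∈ Finset.range (N+1), ∑ q ∈ Finset.range (N+1),
          PowerSeries.coeff p F * PowerSeries.coeff q G * powT a (p+q) w := by
    show (∑ i ∈ Finset.range (N + 1), substT F a (w.take i) * substT G a (w.drop i)) = _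
    rw [Finset.sum_congr rfl (fun i hi => by rw [h1 i hi, h2 i hi, Finset.sum_mul_sum])]
    rw [Finset.sum_comm]
    refine Finset.sum_congr rfl fun p hp => ?_
    rw [Finset.sum_comm]
    refine Finset.sum_congr rfl fun q hq => ?_
    rw [powT_add]
    show _ = PowerSeries.coeff p F * PowerSeries.coeff q G *
      (∑ i ∈ Finset.range (N+1), powT a p (w.take i) * powT a q (w.drop i))
    rw [Finset.mul_sum]
    exact Finset.sum_congr rfl fun i _ => by ring
  have hL : substT (F * G) a w = ∑ m ∈ Finset.range (N+1), ∑ ij ∈ Finset.HasAntidiagonal.antidiagonal m,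
      PowerSeries.coeff ij.1 F * PowerSeries.coeff ij.2 G * powT a (ij.1 + ij.2) w := by
    unfold substT
    refine Finset.sum_congr rfl fun m hm => ?_
    rw [PowerSeries.coeff_mul, Finset.sum_mul]
    refine Finset.sum_congr rfl fun ij hij => ?_
    rw [Finset.HasAntidiagonal.mem_antidiagonal] at hij
    rw [hij]
  rw [hL, hR, square_sum_antidiag N _ (fun p q hpq => by
    rw [powT_eq_zero ha _ _ hpq, mul_zero])]

lemma substT_rescale (c : ℚ) (F : PowerSeries ℚ) (a : T n) :
    substT (PowerSeries.rescale c F) a = substT F (c • a) := by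
  funext w
  unfold substT
  refine Finset.sum_congr rfl fun m _ => ?_
  rw [PowerSeries.coeff_rescale, powT_smul]
  simp only [Pi.smul_apply, smul_eq_mul]
  ring

lemma coeff_pow_eq_zero {G : PowerSeries ℚ} (hG : PowerSeries.coeff 0 G = 0)
    {j m : ℕ} (hjm : j < m) : PowerSeries.coeff j (G ^ m) = 0 := by
  have : (PowerSeries.X : PowerSeries ℚ) ∣ G := by
    rw [PowerSeries.X_dvd_iff]
    simpa [PowerSeries.constantCoeff] using hG
  obtain ⟨H, rfl⟩ := this
  rw [mul_pow, PowerSeries.coeff_X_pow_mul', if_neg (by omega)]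

lemma substT_substT {a : T n} (ha : a [] = 0) {G : PowerSeries ℚ}
    (hG : PowerSeries.coeff 0 G = 0) (F : PowerSeries ℚ) :
    substT F (substT G a)
      = substT (PowerSeries.mk fun j => ∑ m ∈ Finset.range (j+1),
          PowerSeries.coeff m F * PowerSeries.coeff j (G ^ m)) a := by
  have hb : substT G a [] = 0 := by rw [substT_apply_nil]; exact hG
  have hpow : ∀ m : ℕ, powT (substT G a) m = substT (G ^ m) a := by
    intro m
    induction m with
    | zero => rw [pow_zero]; exact (substT_one a).symm
    | succ m ih =>
      show mulT (substT G a) (powT (substT G a) m) = _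
      rw [ih, ← substT_mul ha, ← pow_succ']
  funext w
  set N := w.length with hNdef
  have lhs_eq : substT F (substT G a) w
      = ∑ j ∈ Finset.range (N+1), (∑ m ∈ Finset.range (N+1),
          PowerSeries.coeff m F * PowerSeries.coeff j (G ^ m)) * powT a j w := by
    show (∑ m ∈ Finset.range (N+1), PowerSeries.coeff m F * powT (substT G a) m w) = _
    have step : ∀ m ∈ Finset.range (N+1), PowerSeries.coeff m F * powT (substT G a) m w
        = ∑ j ∈ Finset.range (N+1),
            PowerSeries.coeff m F * (PowerSeries.coeff j (G ^ m) * powT a j w) := by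
      intro m _
      rw [hpow m]
      show PowerSeries.coeff m F * (∑ j ∈ Finset.range (N+1),
          PowerSeries.coeff j (G ^ m) * powT a j w) = _
      rw [Finset.mul_sum]
    rw [Finset.sum_congr rfl step]
    rw [Finset.sum_comm]
    refine Finset.sum_congr rfl fun j hj => ?_
    rw [Finset.sum_mul]
    exact Finset.sum_congr rfl fun m _ => by ring
  rw [lhs_eq]
  show _ = ∑ j ∈ Finset.range (N+1), PowerSeries.coeff j (PowerSeries.mk fun j =>
      ∑ m ∈ Finset.range (j+1), PowerSeries.coeff m F * PowerSeries.coeff j (G ^ m))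
      * powT a j w
  simp only [PowerSeries.coeff_mk]
  refine Finset.sum_congr rfl fun j hj => ?_
  rw [Finset.mem_range] at hj
  congr 1
  symm
  apply Finset.sum_subset (Finset.range_subset_range.2 (by omega))
  intro m hm hm'
  rw [Finset.mem_range] at hm hm'
  rw [coeff_pow_eq_zero hG (by omega), mul_zero]

end PowSubst

namespace StAux
open PowerSeries

lemma coeff_L (m : ℕ) : coeff m logSeries = if m = 0 then 0 else (-1 : ℚ) ^ (m + 1) / m :=
  coeff_mk _ _

lemma coeff_L0 : coeff 0 logSeries = 0 := by simp [coeff_L]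

lemma Rexp_mul : rescale (-1 : ℚ) (exp ℚ) * exp ℚ = 1 := by
  have h := PowerSeries.exp_mul_exp_neg_eq_one (A := ℚ)
  unfold PowerSeries.evalNegHom at h
  rw [mul_comm] at h
  exact h

lemma exp_Rmul : exp ℚ * rescale (-1 : ℚ) (exp ℚ) = 1 := by
  rw [mul_comm]; exact Rexp_mul

lemma coeff_R0 : coeff 0 (rescale (-1 : ℚ) (exp ℚ)) = 1 := by
  rw [coeff_rescale, coeff_exp]
  norm_num

lemma coeff_one_add_X_mul (φ : ℚ⟦X⟧) (j : ℕ) :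
    coeff j ((1 + X) * φ) = coeff j φ + (if 1 ≤ j then coeff (j-1) φ else 0) := by
  rw [add_mul, one_mul, map_add, ← pow_one (X : ℚ⟦X⟧), PowerSeries.coeff_X_pow_mul']

lemma coeff_DL (j : ℕ) : coeff j ((d⁄dX ℚ) logSeries) = (-1:ℚ)^j := by
  rw [coeff_derivative, coeff_L, if_neg (by omega)]
  have h : ((j:ℚ)+1) ≠ 0 := by positivity
  have h2 : (-1:ℚ)^(j+1+1) = (-1)^j := by rw [pow_succ, pow_succ]; ring
  rw [h2]
  push_cast
  field_simp

lemma deriv_L : (1 + X) * (d⁄dX ℚ) logSeries = 1 := by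
  ext j
  rw [coeff_one_add_X_mul]
  cases j with
  | zero => simp [coeff_DL, coeff_one]
  | succ k =>
    rw [if_pos (by omega), Nat.add_sub_cancel, coeff_DL, coeff_DL, coeff_one,
      if_neg (by omega), pow_succ]
    ring

lemma coeff_oneX_mul_deriv (φ : ℚ⟦X⟧) (j : ℕ) :
    coeff j ((1 + X) * (d⁄dX ℚ) φ)
      = coeff (j+1) φ * (j+1) + coeff j φ * j := by
  rw [coeff_one_add_X_mul]
  cases j with
  | zero => simp [coeff_derivative]
  | succ k =>
    rw [if_pos (by omega), Nat.add_sub_cancel, coeff_derivative, coeff_derivative]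
    push_cast
    ring

lemma hDm (m : ℕ) : (1 + X) * (d⁄dX ℚ) (logSeries ^ (m+1)) = (m+1) • logSeries ^ m := by
  rw [Derivation.leibniz_pow, Nat.add_sub_cancel]
  simp only [smul_eq_mul, nsmul_eq_mul]
  push_cast
  rw [show (1 + X) * (((m:ℚ⟦X⟧)+1) * (logSeries ^ m * (d⁄dX ℚ) logSeries))
      = ((m:ℚ⟦X⟧)+1) * (logSeries ^ m * ((1 + X) * (d⁄dX ℚ) logSeries)) by ring,
    deriv_L, mul_one]

lemma recm (m j : ℕ) :
    coeff (j+1) (logSeries ^ (m+1)) * (j+1) + coeff j (logSeries ^ (m+1)) * j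
      = (m+1 : ℚ) * coeff j (logSeries ^ m) := by
  have h := congrArg (coeff j) (hDm m)
  rw [coeff_oneX_mul_deriv] at h
  rw [h, map_nsmul, nsmul_eq_mul]
  all_goals (push_cast; ring)

noncomputable def Cc (j : ℕ) : ℚ :=
  ∑ m ∈ Finset.range (j+1), coeff m (exp ℚ) * coeff j (logSeries ^ m)

lemma coeff_pow_eq_zero' {G : PowerSeries ℚ} (hG : PowerSeries.coeff 0 G = 0)
    {j m : ℕ} (hjm : j < m) : PowerSeries.coeff j (G ^ m) = 0 := by
  have : (PowerSeries.X : PowerSeries ℚ) ∣ G := by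
    rw [PowerSeries.X_dvd_iff]
    simpa [PowerSeries.constantCoeff] using hG
  obtain ⟨H, rfl⟩ := this
  rw [mul_pow, PowerSeries.coeff_X_pow_mul', if_neg (by omega)]

lemma exp_coeff_succ_mul (m : ℕ) : coeff (m+1) (exp ℚ) * (m+1) = coeff m (exp ℚ) := by
  rw [coeff_exp, coeff_exp]
  simp only [Algebra.algebraMap_self, map_div₀, map_one, RingHom.id_apply, map_natCast]
  rw [Nat.factorial_succ]
  have h1 : ((m+1) * Nat.factorial m : ℚ) ≠ 0 := by positivity
  push_cast
  field_simp
  try ring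

lemma Crec (j : ℕ) : (j+1 : ℚ) * Cc (j+1) = (1 - j) * Cc j := by
  have hsplit : Cc (j+1) = ∑ m ∈ Finset.range (j+1),
      coeff (m+1) (exp ℚ) * coeff (j+1) (logSeries ^ (m+1)) := by
    unfold Cc
    rw [Finset.sum_range_succ' (fun m => coeff m (exp ℚ) * coeff (j+1) (logSeries ^ m))]
    rw [pow_zero, coeff_one, if_neg (by omega), mul_zero, add_zero]
  have key : ∀ m ∈ Finset.range (j+1),
      (j+1:ℚ) * (coeff (m+1) (exp ℚ) * coeff (j+1) (logSeries ^ (m+1)))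
      = coeff m (exp ℚ) * coeff j (logSeries ^ m)
        - (j:ℚ) * (coeff (m+1) (exp ℚ) * coeff j (logSeries ^ (m+1))) := by
    intro m _
    have h2 : coeff (j+1) (logSeries ^ (m+1)) * (j+1)
        = (m+1 : ℚ) * coeff j (logSeries ^ m) - coeff j (logSeries ^ (m+1)) * j := by
      linarith [recm m j]
    have h3 := exp_coeff_succ_mul m
    calc (j+1:ℚ) * (coeff (m+1) (exp ℚ) * coeff (j+1) (logSeries ^ (m+1)))
        = coeff (m+1) (exp ℚ) * (coeff (j+1) (logSeries ^ (m+1)) * (j+1)) := by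
          push_cast; ring
      _ = coeff (m+1) (exp ℚ)
            * ((m+1 : ℚ) * coeff j (logSeries ^ m) - coeff j (logSeries ^ (m+1)) * j) := by
          rw [h2]
      _ = (coeff (m+1) (exp ℚ) * (m+1)) * coeff j (logSeries ^ m)
            - (j:ℚ) * (coeff (m+1) (exp ℚ) * coeff j (logSeries ^ (m+1))) := by
          push_cast; ring
      _ = _ := by rw [h3]
  have hback : ∑ m ∈ Finset.range (j+1), coeff (m+1) (exp ℚ) * coeff j (logSeries ^ (m+1))
      = Cc j - (if j = 0 then 1 else 0) := by
    have h4 := Finset.sum_range_succ' (fun m => coeff m (exp ℚ) * coeff j (logSeries ^ m)) (j+1)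
    have h0 : ∑ m ∈ Finset.range (j+1+1), coeff m (exp ℚ) * coeff j (logSeries ^ m)
        = Cc j := by
      rw [Finset.sum_range_succ]
      have : coeff j (logSeries ^ (j+1)) = 0 := coeff_pow_eq_zero' coeff_L0 (by omega)
      rw [this, mul_zero, add_zero]
      rfl
    rw [h0, pow_zero, coeff_one, coeff_exp] at h4
    simp only [Nat.factorial_zero, Nat.cast_one, ne_eq, one_ne_zero, not_false_eq_true,
      div_self, map_one, one_mul] at h4
    linarith [h4]
  rw [hsplit, Finset.mul_sum, Finset.sum_congr rfl key, Finset.sum_sub_distrib,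
    ← Finset.mul_sum, hback]
  have hCj : ∑ m ∈ Finset.range (j+1), coeff m (exp ℚ) * coeff j (logSeries ^ m) = Cc j := rfl
  rw [hCj]
  rcases eq_or_ne j 0 with rfl | hj
  · norm_num
  · rw [if_neg hj]; push_cast; ring

lemma Cc_val (j : ℕ) : Cc j = if j = 0 then 1 else if j = 1 then 1 else 0 := by
  induction j with
  | zero =>
    unfold Cc
    simp [coeff_exp]
  | succ k ih =>
    have h := Crec k
    rw [ih] at h
    rcases Nat.eq_zero_or_pos k with rfl | hk
    · norm_num at h ⊢
      linarith
    · have hk1 : (k:ℚ) + 1 ≠ 0 := by positivity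
      rw [if_neg (by omega), if_neg (by omega)]
      rcases eq_or_ne k 1 with rfl | hk2
      · norm_num at h
        linarith
      · rw [if_neg (by omega), if_neg hk2] at h
        have : ((k:ℚ)+1) * Cc (k+1) = 0 := by rw [h]; ring
        exact (mul_eq_zero.1 this).resolve_left hk1

lemma compS_exp_log :
    (PowerSeries.mk fun j => ∑ m ∈ Finset.range (j+1),
        coeff m (exp ℚ) * coeff j (logSeries ^ m)) = 1 + X := by
  ext j
  rw [coeff_mk]
  have : ∑ m ∈ Finset.range (j+1), coeff m (exp ℚ) * coeff j (logSeries ^ m) = Cc j := rfl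
  rw [this, Cc_val, map_add, coeff_one, coeff_X]
  rcases eq_or_ne j 0 with rfl | h0
  · norm_num
  · rcases eq_or_ne j 1 with rfl | h1
    · norm_num
    · simp [h0, h1]

end StAux

section Glue
variable {n : ℕ}

lemma mulT_neg_left (f g : T n) : mulT (-f) g = -mulT f g := by
  funext w
  simp only [mulT, Pi.neg_apply, neg_mul, Finset.sum_neg_distrib]

lemma xgen_nil (k : Fin n) : xgen k [] = 0 := by simp [xgen]

lemma x0_nil : x0 n [] = 0 := by rw [x0_apply]; simp

lemma oneT_nil : (oneT : T n) [] = 1 := by simp [oneT]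

lemma Xi_nil : Xi n [] = 0 := by
  show substT logSeries _ [] = 0
  rw [substT_apply_nil, StAux.coeff_L0]

lemma negXi_nil : (-(Xi n)) [] = 0 := by
  rw [Pi.neg_apply, Xi_nil, neg_zero]

lemma expT_neg_eq (a : T n) : expT (-a) = substT (PowerSeries.rescale (-1) (PowerSeries.exp ℚ)) a := by
  unfold expT
  rw [substT_rescale, neg_one_smul]

lemma expT_nil (a : T n) : expT a [] = 1 := by
  rw [expT, substT_apply_nil, PowerSeries.coeff_exp]
  norm_num

lemma prodT_append (u v : List (T n)) : prodT (u ++ v) = mulT (prodT u) (prodT v) := by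
  induction u with
  | nil => rw [List.nil_append]; exact (one_mulT _).symm
  | cons a t ih =>
    show mulT a (prodT (t ++ v)) = mulT (mulT a (prodT t)) (prodT v)
    rw [ih, mulT_assoc]

lemma exp_xgen_inv (k : Fin n) : mulT (expT (xgen k)) (expT (-(xgen k))) = oneT := by
  rw [expT_neg_eq]
  show mulT (substT (PowerSeries.exp ℚ) (xgen k)) _ = oneT
  rw [← substT_mul (xgen_nil k), StAux.exp_Rmul, substT_one]

lemma exp_prod_inv : ∀ l : List (Fin n),
    mulT (prodT (l.map fun k => expT (xgen k)))
      (prodT (l.reverse.map fun k => expT (-(xgen k)))) = oneT := by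
  intro l
  induction l with
  | nil => exact mulT_one oneT
  | cons k t ih =>
    simp only [List.map_cons, List.reverse_cons, List.map_append, List.map_cons, List.map_nil]
    rw [prodT_append]
    show mulT (mulT (expT (xgen k)) (prodT (t.map fun k => expT (xgen k))))
        (mulT (prodT (t.reverse.map fun k => expT (-(xgen k))))
          (mulT (expT (-(xgen k))) oneT)) = oneT
    rw [mulT_one, mulT_assoc, ← mulT_assoc (prodT (t.map fun k => expT (xgen k))), ih,
      one_mulT, exp_xgen_inv]

lemma A_nil : prodT ((List.finRange n).map fun k => expT (xgen k)) [] = 1 := by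
  generalize List.finRange n = l
  induction l with
  | nil => exact oneT_nil
  | cons k t ih =>
    show mulT (expT (xgen k)) (prodT (t.map fun k => expT (xgen k))) [] = 1
    rw [mulT_apply_nil, expT_nil, ih, one_mul]

lemma expT_Xi : expT (Xi n) = prodT ((List.finRange n).map fun k => expT (xgen k)) := by
  set A := prodT ((List.finRange n).map fun k => expT (xgen k)) with hA
  have ha : (A - oneT : T n) ([] : Word n) = 0 := by
    rw [Pi.sub_apply]
    rw [hA, A_nil, oneT_nil, sub_self]
  show substT (PowerSeries.exp ℚ) (substT logSeries (A - oneT)) = A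
  rw [substT_substT ha StAux.coeff_L0, StAux.compS_exp_log, substT_add, substT_one, substT_X ha]
  abel

lemma expT_negXi_inv : mulT (expT (-(Xi n))) (expT (Xi n)) = oneT := by
  rw [expT_neg_eq]
  show mulT _ (substT (PowerSeries.exp ℚ) (Xi n)) = oneT
  rw [← substT_mul Xi_nil, StAux.Rexp_mul, substT_one]

lemma part3 : expT (-(Xi n)) = prodT ((List.finRange n).reverse.map fun k => expT (-(xgen k))) := by
  set B := prodT ((List.finRange n).reverse.map fun k => expT (-(xgen k))) with hB
  have hAB : mulT (expT (Xi n)) B = oneT := by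
    rw [expT_Xi]; exact exp_prod_inv (List.finRange n)
  calc expT (-(Xi n)) = mulT (expT (-(Xi n))) oneT := (mulT_one _).symm
    _ = mulT (expT (-(Xi n))) (mulT (expT (Xi n)) B) := by rw [hAB]
    _ = mulT (mulT (expT (-(Xi n))) (expT (Xi n))) B := (mulT_assoc _ _ _).symm
    _ = mulT oneT B := by rw [expT_negXi_inv]
    _ = B := one_mulT B

end Glue

/-- Let `Ξ = x₁ * ⋯ * xₙ` (BCH product), let `V = (-Ξ)⁻¹` be the `⋄`-inverse of `-Ξ`,
and set `Y = V + x₀ s(Ξ) x₀`.  Then the `⋄`-inverse of `Y` is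
`-1 + e^{-Ξ} = -1 + e^{-xₙ} ⋯ e^{-x₁}`; in particular `(-1 + e^{-Ξ}) ⋄ Y = x₀`. -/
theorem statement9 (n : ℕ) (s : PowerSeries ℚ) (hs : sSpec s)
    (V : T n) (hV : degGE 2 (V - x0 n))
    (hV1 : dia (-(Xi n)) V = x0 n) (hV2 : dia V (-(Xi n)) = x0 n) :
    dia (expT (-(Xi n)) - oneT) (V + mulT (x0 n) (mulT (substT s (Xi n)) (x0 n))) = x0 n ∧
    dia (V + mulT (x0 n) (mulT (substT s (Xi n)) (x0 n))) (expT (-(Xi n)) - oneT) = x0 n ∧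
    expT (-(Xi n)) = prodT ((List.finRange n).reverse.map fun k => expT (-(xgen k))) := by
  set R : PowerSeries ℚ := PowerSeries.rescale (-1) (PowerSeries.exp ℚ) with hRdef
  set S : T n := substT s (Xi n) with hSdef
  set E : T n := substT (R - 1) (Xi n) with hEdef
  have hE : expT (-(Xi n)) - oneT = E := by
    rw [expT_neg_eq, hEdef, substT_sub, substT_one]
  have hE0 : E [] = 0 := by
    rw [hEdef, substT_apply_nil, map_sub, hRdef, StAux.coeff_R0]
    simp
  have hP1 : mulT (mulT E S) (Xi n) = Xi n + E := by
    have : mulT (mulT E S) (Xi n)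
        = substT (((R - 1) * s) * PowerSeries.X) (Xi n) := by
      rw [substT_mul Xi_nil, substT_mul Xi_nil, substT_X Xi_nil]
    rw [this, show ((R - 1) * s) * PowerSeries.X = s * (PowerSeries.X * (R - 1)) by ring,
      hs, substT_add, substT_X Xi_nil]
  have hP2 : mulT (Xi n) (mulT S E) = Xi n + E := by
    have : mulT (Xi n) (mulT S E)
        = substT (PowerSeries.X * (s * (R - 1))) (Xi n) := by
      rw [substT_mul Xi_nil, substT_mul Xi_nil, substT_X Xi_nil]
    rw [this, show PowerSeries.X * (s * (R - 1)) = s * (PowerSeries.X * (R - 1)) by ring,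
      hs, substT_add, substT_X Xi_nil]
  refine ⟨?_, ?_, part3⟩
  · -- part 1
    rw [hE, dia_add_right]
    have hterm : dia E (mulT (x0 n) (mulT S (x0 n))) = mulT E (mulT S (x0 n)) := by
      rw [dia_mulx0_right, hE0, zero_smul, sub_zero]
    set Z : T n := x0 n - mulT (mulT E S) (x0 n) with hZdef
    have hZ0 : Z [] = 0 := by
      rw [hZdef, Pi.sub_apply, x0_nil, mulT_apply_nil, x0_nil, mul_zero, sub_zero]
    have hZ : dia Z (-(Xi n)) = E := by
      rw [hZdef, dia_sub_left, dia_x0_left negXi_nil, dia_mulx0_left, mulT_neg_right, hP1,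
        negXi_nil, zero_smul, sub_zero]
      abel
    have hdiaEV : dia E V = Z := by
      calc dia E V = dia (dia Z (-(Xi n))) V := by rw [hZ]
        _ = dia Z (dia (-(Xi n)) V) := dia_assoc _ _ _
        _ = dia Z (x0 n) := by rw [hV1]
        _ = Z := dia_x0_right hZ0
    rw [hdiaEV, hterm, hZdef, mulT_assoc]
    abel
  · -- part 2
    rw [hE, dia_add_left]
    have hterm : dia (mulT (x0 n) (mulT S (x0 n))) E = mulT (mulT (x0 n) S) E := by
      rw [← mulT_assoc, dia_mulx0_left, hE0, zero_smul, sub_zero]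
    set Z : T n := x0 n - mulT (x0 n) (mulT S E) with hZdef
    have hZ0 : Z [] = 0 := by
      rw [hZdef, Pi.sub_apply, x0_nil, mulT_apply_nil, x0_nil, zero_mul, sub_zero]
    have hZ : dia (-(Xi n)) Z = E := by
      rw [hZdef, dia_sub_right, dia_x0_right negXi_nil, dia_mulx0_right, mulT_neg_left, hP2,
        negXi_nil, zero_smul, sub_zero]
      abel
    have hdiaVE : dia V E = Z := by
      calc dia V E = dia V (dia (-(Xi n)) Z) := by rw [hZ]
        _ = dia (dia V (-(Xi n))) Z := (dia_assoc _ _ _).symm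
        _ = dia (x0 n) Z := by rw [hV2]
        _ = Z := dia_x0_left hZ0
    rw [hdiaVE, hterm, hZdef, mulT_assoc]
    abel
end

section
/- Let W be the closed linear span in T_{\ge 1} of monomials x_{k_1}···x_{k_m} with k_1 ≥ k_2 ≥ ··· ≥ k_m, and let I be the closed linear span of monomials involving at least two distinct indices. Then W is a subalgebra and I a two-sided ideal of (T_{\ge 1}, ⋄), and W decomposes as a direct sum W = (W ∩ I) ⊕ \bigoplus_{k=1}^n x_k Q[[x_k]]. -/
/-- `W`: the closed linear span in `T_{≥1}` of the monomials `x_{k₁}⋯x_{kₘ}` with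
`k₁ ≥ k₂ ≥ ⋯ ≥ kₘ` (m ≥ 1), i.e. functions supported on nonempty weakly-decreasing words. -/
def Wsub (n : ℕ) : Submodule ℚ (T n) where
  carrier := {f | ∀ w : Word n, ¬(w ≠ [] ∧ w.Chain' (fun a b => b ≤ a)) → f w = 0}
  add_mem' := by
    intro f g hf hg w hw
    simp only [Pi.add_apply, hf w hw, hg w hw, add_zero]
  zero_mem' := by intro w _; rfl
  smul_mem' := by
    intro c f hf w hw
    simp only [Pi.smul_apply, hf w hw, smul_zero]

/-- `I`: the closed linear span of monomials involving at least two distinct indices,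
i.e. functions supported on words with at least two distinct letters. -/
def Isub (n : ℕ) : Submodule ℚ (T n) where
  carrier := {f | ∀ w : Word n, w.dedup.length < 2 → f w = 0}
  add_mem' := by
    intro f g hf hg w hw
    simp only [Pi.add_apply, hf w hw, hg w hw, add_zero]
  zero_mem' := by intro w _; rfl
  smul_mem' := by
    intro c f hf w hw
    simp only [Pi.smul_apply, hf w hw, smul_zero]

/-- `⨁ₖ xₖ ℚ[[xₖ]]`: the closed linear span of the powers `xₖ^m`, `m ≥ 1`, `1 ≤ k ≤ n`,
i.e. functions supported on nonempty constant words. -/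
def Dsub (n : ℕ) : Submodule ℚ (T n) where
  carrier := {f | ∀ w : Word n,
    (¬∃ k : Fin n, ∃ m : ℕ, 1 ≤ m ∧ w = List.replicate m k) → f w = 0}
  add_mem' := by
    intro f g hf hg w hw
    simp only [Pi.add_apply, hf w hw, hg w hw, add_zero]
  zero_mem' := by intro w _; rfl
  smul_mem' := by
    intro c f hf w hw
    simp only [Pi.smul_apply, hf w hw, smul_zero]


lemma chain'_of_take_drop {α : Type*} {R : α → α → Prop} (w : List α) (i : ℕ)
    (h1 : (w.take (i+1)).Chain' R) (h2 : (w.drop i).Chain' R) : w.Chain' R := by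
  simp only [List.Chain', List.isChain_iff_getElem] at *
  intro j hj
  rcases lt_or_ge j i with hji | hji
  · have hlen : j + 1 < (w.take (i+1)).length := by
      simp only [List.length_take]; omega
    have := h1 j hlen
    simpa only [List.get_eq_getElem, List.getElem_take] using this
  · have hlen : j - i + 1 < (w.drop i).length := by
      simp only [List.length_drop]; omega
    have := h2 (j - i) hlen
    simp only [List.get_eq_getElem, List.getElem_drop] at this
    have e1 : i + (j - i) = j := by omega
    have e2 : i + (j - i + 1) = j + 1 := by omega
    convert this using 2 <;> omega

lemma dedup_len_lt_two {α : Type*} [DecidableEq α] {l : List α}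
    (h : ∀ a ∈ l, ∀ b ∈ l, a = b) : l.dedup.length < 2 := by
  rcases hd : l.dedup with _ | ⟨a, _ | ⟨b, t⟩⟩
  · simp
  · simp
  · exfalso
    have hnd := l.nodup_dedup
    rw [hd] at hnd
    have ha : a ∈ l := List.mem_dedup.mp (by rw [hd]; simp)
    have hb : b ∈ l := List.mem_dedup.mp (by rw [hd]; simp)
    have : a = b := h a ha b hb
    simp [this] at hnd

lemma const_of_dedup {n : ℕ} {w : List (Fin n)} (hne : w ≠ [])
    (hlt : w.dedup.length < 2) : ∃ k, w = List.replicate w.length k := by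
  have hd : w.dedup ≠ [] := by rwa [ne_eq, List.dedup_eq_nil]
  have : w.dedup.length = 1 := by
    have := List.length_pos_iff.mpr hd; omega
  obtain ⟨k, hk⟩ := List.length_eq_one_iff.mp this
  refine ⟨k, List.eq_replicate_length.mpr fun b hb => ?_⟩
  have : b ∈ w.dedup := List.mem_dedup.mpr hb
  rw [hk] at this; simpa using this

lemma replicate_chain {n : ℕ} (m : ℕ) (k : Fin n) :
    (List.replicate m k).Chain' (fun a b => b ≤ a) :=
  List.isChain_replicate_of_rel m le_rfl
lemma eq_of_dedup {α : Type*} [DecidableEq α] {l : List α} (h : l.dedup.length < 2) :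
    ∀ a ∈ l, ∀ b ∈ l, a = b := by
  intro a ha b hb
  have ha' := List.mem_dedup.mpr ha
  have hb' := List.mem_dedup.mpr hb
  rcases hd : l.dedup with _ | ⟨k, t⟩
  · rw [hd] at ha'; simp at ha'
  · rw [hd] at h ha' hb'
    have ht : t = [] := by
      simp only [List.length_cons] at h
      exact List.length_eq_zero_iff.mp (by omega)
    subst ht
    simp only [List.mem_singleton] at ha' hb'
    rw [ha', hb']

lemma replicate_ne_nil' {n : ℕ} {m : ℕ} (hm : 1 ≤ m) (k : Fin n) :
    List.replicate m k ≠ [] := by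
  intro h
  have := congrArg List.length h
  simp at this
  omega

/-- `W` is a `⋄`-subalgebra, `I` is a two-sided `⋄`-ideal of `T_{≥1}`, and
`W = (W ∩ I) ⊕ ⨁ₖ xₖℚ[[xₖ]]`. -/
theorem statement14 (n : ℕ) :
    (∀ f g : T n, f ∈ Wsub n → g ∈ Wsub n → dia f g ∈ Wsub n) ∧
    (∀ f g : T n, f ∈ Isub n → g [] = 0 → dia f g ∈ Isub n ∧ dia g f ∈ Isub n) ∧
    Wsub n = (Wsub n ⊓ Isub n) ⊔ Dsub n ∧
    (Wsub n ⊓ Isub n) ⊓ Dsub n = ⊥ := by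
  classical
  refine ⟨?_, ?_, ?_, ?_⟩
  · -- W is a subalgebra
    intro f g hf hg w hw
    show -∑ i ∈ Finset.range w.length, f (w.take (i + 1)) * g (w.drop i) = 0
    rw [neg_eq_zero]
    apply Finset.sum_eq_zero
    intro i hi
    have hi' : i < w.length := Finset.mem_range.mp hi
    have hwe : w ≠ [] := by
      intro h; subst h; simp at hi'
    have hnc : ¬ w.Chain' (fun a b => b ≤ a) := fun hc => hw ⟨hwe, hc⟩
    by_cases h1 : (w.take (i + 1)).Chain' (fun a b => b ≤ a)
    · have h2 : ¬ (w.drop i).Chain' (fun a b => b ≤ a) :=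
        fun h2 => hnc (chain'_of_take_drop w i h1 h2)
      rw [hg _ (fun hcon => h2 hcon.2), mul_zero]
    · rw [hf _ (fun hcon => h1 hcon.2), zero_mul]
  · -- I is a two-sided ideal
    intro f g hf _
    constructor
    · intro w hw
      show -∑ i ∈ Finset.range w.length, f (w.take (i + 1)) * g (w.drop i) = 0
      rw [neg_eq_zero]
      apply Finset.sum_eq_zero
      intro i _
      have : f (w.take (i + 1)) = 0 := by
        apply hf
        apply dedup_len_lt_two
        intro a ha b hb
        exact eq_of_dedup hw a ((List.take_sublist _ _).subset ha) b
          ((List.take_sublist _ _).subset hb)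
      rw [this, zero_mul]
    · intro w hw
      show -∑ i ∈ Finset.range w.length, g (w.take (i + 1)) * f (w.drop i) = 0
      rw [neg_eq_zero]
      apply Finset.sum_eq_zero
      intro i _
      have : f (w.drop i) = 0 := by
        apply hf
        apply dedup_len_lt_two
        intro a ha b hb
        exact eq_of_dedup hw a ((List.drop_sublist _ _).subset ha) b
          ((List.drop_sublist _ _).subset hb)
      rw [this, mul_zero]
  · -- direct sum decomposition: span equality
    apply le_antisymm
    · intro f hf
      set f₂ : T n := fun w =>
        if ∃ k : Fin n, ∃ m : ℕ, 1 ≤ m ∧ w = List.replicate m k then f w else 0 with hf₂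
      have hf2D : f₂ ∈ Dsub n := fun w hw => if_neg hw
      have h1 : f - f₂ ∈ Wsub n ⊓ Isub n := by
        refine Submodule.mem_inf.mpr ⟨?_, ?_⟩
        · intro w hw
          have hfw := hf w hw
          have h2 : f₂ w = 0 := by
            by_cases hc : ∃ k : Fin n, ∃ m : ℕ, 1 ≤ m ∧ w = List.replicate m k
            · exfalso
              obtain ⟨k, m, hm, rfl⟩ := hc
              exact hw ⟨replicate_ne_nil' hm k, replicate_chain m k⟩
            · exact if_neg hc
          show f w - f₂ w = 0
          rw [hfw, h2, sub_zero]
        · intro w hw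
          by_cases hwe : w = []
          · subst hwe
            have hfw : f [] = 0 := hf [] (by simp)
            have h2 : f₂ [] = 0 := by
              apply if_neg
              rintro ⟨k, m, hm, h⟩
              exact replicate_ne_nil' hm k h.symm
            show f [] - f₂ [] = 0
            rw [hfw, h2, sub_zero]
          · obtain ⟨k, hk⟩ := const_of_dedup hwe hw
            have hc : ∃ k : Fin n, ∃ m : ℕ, 1 ≤ m ∧ w = List.replicate m k :=
              ⟨k, w.length, by
                have := List.length_pos_iff.mpr hwe; omega, hk⟩
            have h2 : f₂ w = f w := if_pos hc
            show f w - f₂ w = 0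
            rw [h2, sub_self]
      have hsplit : f = (f - f₂) + f₂ := by
        funext w; show f w = (f w - f₂ w) + f₂ w; ring
      rw [hsplit]
      exact Submodule.add_mem _ (Submodule.mem_sup_left h1) (Submodule.mem_sup_right hf2D)
    · apply sup_le
      · exact inf_le_left
      · intro f hf w hw
        apply hf w
        rintro ⟨k, m, hm, rfl⟩
        exact hw ⟨replicate_ne_nil' hm k, replicate_chain m k⟩
  · -- trivial intersection
    rw [eq_bot_iff]
    intro f hf
    rw [Submodule.mem_bot]
    funext w
    show f w = 0
    by_cases hc : ∃ k : Fin n, ∃ m : ℕ, 1 ≤ m ∧ w = List.replicate m k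
    · obtain ⟨k, m, hm, rfl⟩ := hc
      apply hf.1.2
      apply dedup_len_lt_two
      intro a ha b hb
      rw [List.eq_of_mem_replicate ha, List.eq_of_mem_replicate hb]
    · exact hf.2 w hc
end

section
/- Let Q be the automorphism of T with Q(x_k) = -x_{n-k+1}, and let W be the closed span of weakly-decreasing monomials x_{k_1}···x_{k_m} (k_1 ≥ ··· ≥ k_m). Then any element of W in the kernel of Q+1 (i.e., with Qw = -w) lies in \bigoplus_{k=1}^n x_k Q[[x_k]]. -/

lemma chain_eq_replicate' {n : ℕ} : ∀ (l : Word n) (b : Fin n),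
    List.Chain (fun a c => a = c) b l → b :: l = List.replicate (l.length + 1) b := by
  intro l
  induction l with
  | nil => intro b _; rfl
  | cons c t ih =>
    intro b h
    rcases List.chain_cons.mp h with ⟨rfl, h2⟩
    simpa [List.replicate_succ] using ih b h2

/-- Any element of `W` in the kernel of `Q + 1` lies in `⨁ₖ xₖ ℚ[[xₖ]]`. -/
theorem statement15 (n : ℕ) (f : T n) (hf : f ∈ Wsub n) (hQ : Qauto f = -f) :
    f ∈ Dsub n := by
  intro w hw
  by_cases hne : w = []
  · exact hf w (by simp [hne])
  by_cases hc : w.Chain' (fun a b => b ≤ a)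
  swap
  · exact hf w (by tauto)
  -- show f (w.map Fin.rev) = 0
  have hrev : f (w.map Fin.rev) = 0 := by
    apply hf
    rintro ⟨-, hchain⟩
    have hc2 : w.Chain' (fun a b => a ≤ b) := by
      rw [List.Chain', List.isChain_map] at hchain
      exact hchain.imp (fun a b h => Fin.rev_le_rev.mp h)
    have heq : w.Chain' (fun a b => a = b) := by
      have := List.isChain_iff_getElem.mp hc
      have h2 := List.isChain_iff_getElem.mp hc2
      refine List.isChain_iff_getElem.mpr ?_
      intro i hi
      exact le_antisymm (h2 i hi) (this i hi)
    obtain ⟨a, t, rfl⟩ := List.exists_cons_of_ne_nil hne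
    have := chain_eq_replicate' t a (List.isChain_cons.mp heq |> fun ⟨h1, h2⟩ => by
      cases t with
      | nil => exact List.Chain.nil
      | cons c u => exact List.chain_cons.mpr ⟨h1 c rfl, heq.tail⟩)
    exact hw ⟨a, t.length + 1, by simp, this⟩
  have := congrFun hQ w
  simp only [Qauto, Pi.neg_apply, hrev, mul_zero] at this
  linarith
end

section
/- For a genus g surface setting: in the completed tensor algebra on H with symplectic basis A_1,B_1,...,A_g,B_g and symplectic form ω = \sum_i (A_iB_i - B_iA_i), the Massuyeau–Turaev operation ⋄ (defined via the intersection pairing A_i·B_j = δ_{ij} = -B_j·A_i, all other pairings zero) satisfies: -ω is a two-sided unit for ⋄ on T_{\ge 1}, the restriction of ⋄ to T_{\ge 2} is associative, and ⋄ maps T_{\ge l} × T_{\ge m} into T_{\ge l+m-2}. -/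
/-- The symplectic letters: `(i, false) = Aᵢ`, `(i, true) = Bᵢ`, `1 ≤ i ≤ g`. -/
abbrev SLetter (g : ℕ) := Fin g × Bool

/-- The completed tensor algebra on `H = ⊕ᵢ (ℚAᵢ ⊕ ℚBᵢ)`, modeled as ℚ-valued
coefficient functions on words in the symplectic basis letters. -/
abbrev TS (g : ℕ) : Type := List (SLetter g) → ℚ

/-- The intersection pairing on `H`: `Aᵢ·Bⱼ = δᵢⱼ = -Bᵢ·Aⱼ`, `Aᵢ·Aⱼ = Bᵢ·Bⱼ = 0`. -/
def pairL {g : ℕ} (a b : SLetter g) : ℚ :=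
  if a.1 = b.1 then
    (if a.2 = false ∧ b.2 = true then 1
     else if a.2 = true ∧ b.2 = false then -1 else 0)
  else 0

/-- The monomial `X₁⋯Xₘ` (given by a word) as an element of `TS g`. -/
def monoS {g : ℕ} (w0 : List (SLetter g)) : TS g := fun w => if w = w0 then 1 else 0

/-- The symplectic form `ω = ∑ᵢ (AᵢBᵢ - BᵢAᵢ)`. -/
def omegaS (g : ℕ) : TS g :=
  ∑ i : Fin g, (monoS [(i, false), (i, true)] - monoS [(i, true), (i, false)])

/-- The Massuyeau–Turaev operation `⋄ : T_{≥1} × T_{≥1} → T`, determined on monomials by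
`(X₁⋯X_{l-1}X_l) ⋄ (Y₁Y₂⋯Yₘ) = (X_l·Y₁) X₁⋯X_{l-1}Y₂⋯Yₘ`,
extended bilinearly and continuously. -/
def diaS {g : ℕ} (f h : TS g) : TS g :=
  fun w => ∑ i ∈ Finset.range (w.length + 1), ∑ a : SLetter g, ∑ b : SLetter g,
    pairL a b * f (w.take i ++ [a]) * h (b :: w.drop i)

/-- `f ∈ T_{≥p}`: all components of degree `< p` vanish. -/
def degGES {g : ℕ} (p : ℕ) (f : TS g) : Prop :=
  ∀ w : List (SLetter g), w.length < p → f w = 0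

lemma sum_pair_eq {g : ℕ} (F : SLetter g → SLetter g → ℚ) :
    ∑ a : SLetter g, ∑ b : SLetter g, pairL a b * F a b
      = ∑ j : Fin g, (F (j,false) (j,true) - F (j,true) (j,false)) := by
  simp only [Fintype.sum_prod_type, Fintype.sum_bool, pairL]
  simp only [Finset.sum_ite_eq, ite_mul, Finset.sum_sub_distrib]
  rw [← Finset.sum_sub_distrib]
  exact Finset.sum_congr rfl fun _ _ => by simp; ring

lemma diaS_eq {g : ℕ} (f h : TS g) (w : List (SLetter g)) :
    diaS f h w = ∑ i ∈ Finset.range (w.length + 1), ∑ j : Fin g,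
      (f (w.take i ++ [(j, false)]) * h ((j, true) :: w.drop i)
        - f (w.take i ++ [(j, true)]) * h ((j, false) :: w.drop i)) := by
  unfold diaS
  refine Finset.sum_congr rfl fun i _ => ?_
  rw [show (∑ a : SLetter g, ∑ b : SLetter g,
      pairL a b * f (w.take i ++ [a]) * h (b :: w.drop i))
    = ∑ a : SLetter g, ∑ b : SLetter g,
      pairL a b * (f (w.take i ++ [a]) * h (b :: w.drop i)) by
        simp [mul_assoc]]
  rw [sum_pair_eq (fun a b => f (w.take i ++ [a]) * h (b :: w.drop i))]

lemma omega_len {g : ℕ} (v : List (SLetter g)) (hv : v.length ≠ 2) : omegaS g v = 0 := by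
  simp only [omegaS, Finset.sum_apply, Pi.sub_apply, monoS]
  refine Finset.sum_eq_zero fun j _ => ?_
  rw [if_neg, if_neg, sub_zero]
  · rintro rfl; simp at hv
  · rintro rfl; simp at hv

lemma omega_xA {g : ℕ} (x : SLetter g) (j : Fin g) :
    omegaS g [x, (j, false)] = -(if x = (j, true) then 1 else 0) := by
  simp only [omegaS, Finset.sum_apply, Pi.sub_apply, monoS]
  simp only [List.cons_eq_cons, Prod.mk.injEq, and_true, and_false, if_false]
  simp [ite_and, Finset.sum_ite_eq, and_comm]

lemma omega_xB {g : ℕ} (x : SLetter g) (j : Fin g) :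
    omegaS g [x, (j, true)] = (if x = (j, false) then 1 else 0) := by
  simp only [omegaS, Finset.sum_apply, Pi.sub_apply, monoS]
  simp only [List.cons_eq_cons, Prod.mk.injEq, and_true, and_false, if_false]
  simp [ite_and, Finset.sum_ite_eq, and_comm]

lemma omega_Ax {g : ℕ} (y : SLetter g) (j : Fin g) :
    omegaS g [(j, false), y] = (if y = (j, true) then 1 else 0) := by
  simp only [omegaS, Finset.sum_apply, Pi.sub_apply, monoS]
  simp only [List.cons_eq_cons, Prod.mk.injEq, and_true, and_false, if_false]
  simp [ite_and, Finset.sum_ite_eq, and_comm]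

lemma omega_Bx {g : ℕ} (y : SLetter g) (j : Fin g) :
    omegaS g [(j, true), y] = -(if y = (j, false) then 1 else 0) := by
  simp only [omegaS, Finset.sum_apply, Pi.sub_apply, monoS]
  simp only [List.cons_eq_cons, Prod.mk.injEq, and_true, and_false, if_false]
  simp [ite_and, Finset.sum_ite_eq, and_comm]

lemma sum_delta {g : ℕ} (x : SLetter g) (G : SLetter g → ℚ) :
    ∑ j : Fin g, ((if x = (j, false) then 1 else 0) * G (j, false)
      + (if x = (j, true) then 1 else 0) * G (j, true)) = G x := by
  obtain ⟨x1, x2⟩ := x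
  rw [Finset.sum_eq_single x1]
  · cases x2 <;> simp [Prod.ext_iff]
  · intro b _ hb
    cases x2 <;> simp [Prod.ext_iff] <;> exact fun h => absurd h.symm hb
  · simp

lemma unit_left {g : ℕ} (u : TS g) (hu : u [] = 0) : diaS (-omegaS g) u = u := by
  funext w
  rw [diaS_eq]
  match w with
  | [] =>
    simpa [omega_len (g := g) [((_ : Fin g), false)] (by simp),
      omega_len (g := g) [((_ : Fin g), true)] (by simp)] using hu.symm
  | x :: t =>
    rw [Finset.sum_eq_single 1]
    · have h1 : (x :: t).take 1 = [x] := rfl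
      have h2 : (x :: t).drop 1 = t := rfl
      rw [h1, h2]
      calc ∑ j : Fin g, ((-omegaS g) ([x] ++ [(j, false)]) * u ((j, true) :: t)
            - (-omegaS g) ([x] ++ [(j, true)]) * u ((j, false) :: t))
          = ∑ j : Fin g, ((if x = (j, false) then 1 else 0) * u ((j, false) :: t)
            + (if x = (j, true) then 1 else 0) * u ((j, true) :: t)) := by
            refine Finset.sum_congr rfl fun j _ => ?_
            simp only [List.cons_append, List.nil_append, Pi.neg_apply,
              omega_xA x j, omega_xB x j]
            ring
        _ = u (x :: t) := sum_delta x (fun a => u (a :: t))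
    · intro i hin hi
      rw [Finset.mem_range] at hin
      refine Finset.sum_eq_zero fun j _ => ?_
      have h1 : ((x :: t).take i ++ [((j : Fin g), false)]).length ≠ 2 := by
        simp only [List.length_append, List.length_take, List.length_cons,
          List.length_nil]
        simp only [List.length_cons] at hin
        omega
      have h2 : ((x :: t).take i ++ [((j : Fin g), true)]).length ≠ 2 := by
        simp only [List.length_append, List.length_take, List.length_cons,
          List.length_nil]
        simp only [List.length_cons] at hin
        omega
      simp [Pi.neg_apply, omega_len _ h1, omega_len _ h2]
    · intro hmem
      exact absurd (Finset.mem_range.2 (by simp)) hmem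

lemma unit_right {g : ℕ} (u : TS g) (hu : u [] = 0) : diaS u (-omegaS g) = u := by
  funext w
  rw [diaS_eq]
  rcases List.eq_nil_or_concat w with rfl | ⟨w', y, rfl⟩
  · simpa [omega_len (g := g) [((_ : Fin g), true)] (by simp),
      omega_len (g := g) [((_ : Fin g), false)] (by simp)] using hu.symm
  · simp only [List.concat_eq_append]
    rw [Finset.sum_eq_single w'.length]
    · have ht : (w' ++ [y]).take w'.length = w' := by
        rw [List.take_append_of_le_length le_rfl, List.take_length]
      have hd : (w' ++ [y]).drop w'.length = [y] := by
        rw [List.drop_append_of_le_length le_rfl, List.drop_length, List.nil_append]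
      rw [ht, hd]
      calc ∑ j : Fin g, (u (w' ++ [(j, false)]) * (-omegaS g) ((j, true) :: [y])
            - u (w' ++ [(j, true)]) * (-omegaS g) ((j, false) :: [y]))
          = ∑ j : Fin g, ((if y = (j, false) then 1 else 0) * u (w' ++ [(j, false)])
            + (if y = (j, true) then 1 else 0) * u (w' ++ [(j, true)])) := by
            refine Finset.sum_congr rfl fun j _ => ?_
            simp only [Pi.neg_apply, omega_Bx y j, omega_Ax y j]
            ring
        _ = u (w' ++ [y]) := sum_delta y (fun a => u (w' ++ [a]))
    · intro i hin hi
      rw [Finset.mem_range, List.length_append] at hin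
      refine Finset.sum_eq_zero fun j _ => ?_
      have h1 : (((j : Fin g), true) :: (w' ++ [y]).drop i).length ≠ 2 := by
        simp only [List.length_cons, List.length_drop, List.length_append,
          List.length_nil]
        omega
      have h2 : (((j : Fin g), false) :: (w' ++ [y]).drop i).length ≠ 2 := by
        simp only [List.length_cons, List.length_drop, List.length_append,
          List.length_nil]
        omega
      simp [Pi.neg_apply, omega_len _ h1, omega_len _ h2]
    · intro hmem
      refine absurd (Finset.mem_range.2 ?_) hmem
      simp only [List.length_append, List.length_cons, List.length_nil]
      omega

lemma deg_dia {g : ℕ} (l m : ℕ) (f h : TS g) (hf : degGES l f) (hh : degGES m h) :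
    degGES (l + m - 2) (diaS f h) := by
  intro w hw
  unfold diaS
  refine Finset.sum_eq_zero fun i hi => ?_
  rw [Finset.mem_range] at hi
  refine Finset.sum_eq_zero fun a _ => Finset.sum_eq_zero fun b _ => ?_
  by_cases hil : i + 1 < l
  · have : f (w.take i ++ [a]) = 0 := by
      apply hf
      simp only [List.length_append, List.length_take, List.length_cons,
        List.length_nil]
      omega
    rw [this, mul_zero, zero_mul]
  · have : h (b :: w.drop i) = 0 := by
      apply hh
      simp only [List.length_cons, List.length_drop]
      omega
    rw [this, mul_zero]

/-- The common trilinear expression. -/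
def Etri {g : ℕ} (f h k : TS g) (w : List (SLetter g)) (p i : ℕ) : ℚ :=
  ∑ q : Fin g, ∑ j : Fin g,
    (f (w.take p ++ [(q, false)]) * h ((q, true) :: (w.take i).drop p ++ [(j, false)])
        * k ((j, true) :: w.drop i)
      - f (w.take p ++ [(q, true)]) * h ((q, false) :: (w.take i).drop p ++ [(j, false)])
        * k ((j, true) :: w.drop i)
      - f (w.take p ++ [(q, false)]) * h ((q, true) :: (w.take i).drop p ++ [(j, true)])
        * k ((j, false) :: w.drop i)
      + f (w.take p ++ [(q, true)]) * h ((q, false) :: (w.take i).drop p ++ [(j, true)])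
        * k ((j, false) :: w.drop i))

lemma dia_fh_take {g : ℕ} (f h : TS g) (hh : degGES 2 h) (w : List (SLetter g))
    (i : ℕ) (hi : i ≤ w.length) (x : SLetter g) :
    diaS f h (w.take i ++ [x]) = ∑ p ∈ Finset.range (i + 1), ∑ q : Fin g,
      (f (w.take p ++ [(q, false)]) * h ((q, true) :: (w.take i).drop p ++ [x])
        - f (w.take p ++ [(q, true)]) * h ((q, false) :: (w.take i).drop p ++ [x])) := by
  rw [diaS_eq]
  have hlen : (w.take i ++ [x]).length = i + 1 := by
    simp only [List.length_append, List.length_take, List.length_cons, List.length_nil]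
    omega
  rw [hlen, Finset.sum_range_succ]
  have hdrop : (w.take i ++ [x]).drop (i + 1) = [] := by
    apply List.drop_eq_nil_of_le
    omega
  rw [hdrop]
  have hz : (∑ j : Fin g,
      (f ((w.take i ++ [x]).take (i+1) ++ [((j:Fin g), false)]) * h ((j, true) :: [])
        - f ((w.take i ++ [x]).take (i+1) ++ [(j, true)]) * h ((j, false) :: []))) = 0 := by
    refine Finset.sum_eq_zero fun j _ => ?_
    rw [hh [(j, true)] (by simp), hh [(j, false)] (by simp)]
    ring
  rw [hz, add_zero]
  refine Finset.sum_congr rfl fun p hp => ?_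
  rw [Finset.mem_range] at hp
  have hp' : p ≤ i := by omega
  have htk : (w.take i ++ [x]).take p = w.take p := by
    rw [List.take_append_of_le_length (by simp; omega), List.take_take,
      min_eq_left hp']
  have hdp : (w.take i ++ [x]).drop p = (w.take i).drop p ++ [x] :=
    List.drop_append_of_le_length (by simp; omega)
  rw [htk, hdp]
  rfl

lemma assoc_lhs {g : ℕ} (f h k : TS g) (hh : degGES 2 h) (w : List (SLetter g)) :
    diaS (diaS f h) k w
      = ∑ i ∈ Finset.range (w.length + 1), ∑ p ∈ Finset.range (i + 1), Etri f h k w p i := by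
  rw [diaS_eq]
  refine Finset.sum_congr rfl fun i hi => ?_
  rw [Finset.mem_range] at hi
  have hi' : i ≤ w.length := by omega
  have e1 : ∀ x : SLetter g, diaS f h (w.take i ++ [x]) = _ :=
    fun x => dia_fh_take f h hh w i hi' x
  simp only [e1]
  simp only [Finset.sum_mul, ← Finset.sum_sub_distrib]
  rw [Finset.sum_comm]
  refine Finset.sum_congr rfl fun p _ => ?_
  rw [Finset.sum_comm]
  unfold Etri
  refine Finset.sum_congr rfl fun q _ => ?_
  refine Finset.sum_congr rfl fun j _ => ?_
  ring

lemma dia_hk_cons {g : ℕ} (h k : TS g) (hh : degGES 2 h) (w : List (SLetter g))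
    (p : ℕ) (hp : p ≤ w.length) (x : SLetter g) :
    diaS h k (x :: w.drop p) = ∑ r ∈ Finset.range (w.length - p + 1), ∑ j : Fin g,
      (h (x :: (w.take (p + r)).drop p ++ [(j, false)]) * k ((j, true) :: w.drop (p + r))
        - h (x :: (w.take (p + r)).drop p ++ [(j, true)]) * k ((j, false) :: w.drop (p + r))) := by
  rw [diaS_eq]
  have hlen : (x :: w.drop p).length = (w.length - p) + 1 := by
    simp only [List.length_cons, List.length_drop]
  rw [hlen, Finset.sum_range_succ']
  have hz : (∑ j : Fin g,
      (h ((x :: w.drop p).take 0 ++ [((j : Fin g), false)]) * k ((j, true) :: (x :: w.drop p).drop 0)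
        - h ((x :: w.drop p).take 0 ++ [(j, true)]) * k ((j, false) :: (x :: w.drop p).drop 0))) = 0 := by
    refine Finset.sum_eq_zero fun j _ => ?_
    simp only [List.take_zero, List.nil_append]
    rw [hh [(j, false)] (by simp), hh [(j, true)] (by simp)]
    ring
  rw [hz, add_zero]
  refine Finset.sum_congr rfl fun r hr => ?_
  rw [Finset.mem_range] at hr
  have htk : (x :: w.drop p).take (r + 1) = x :: (w.take (p + r)).drop p := by
    rw [List.take_succ_cons, List.drop_take, Nat.add_sub_cancel_left]
  have hdp : (x :: w.drop p).drop (r + 1) = w.drop (p + r) := by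
    rw [List.drop_succ_cons, List.drop_drop]
  rw [htk, hdp]

lemma assoc_rhs {g : ℕ} (f h k : TS g) (hh : degGES 2 h) (w : List (SLetter g)) :
    diaS f (diaS h k) w
      = ∑ p ∈ Finset.range (w.length + 1), ∑ r ∈ Finset.range (w.length - p + 1),
          Etri f h k w p (p + r) := by
  rw [diaS_eq]
  refine Finset.sum_congr rfl fun p hp => ?_
  rw [Finset.mem_range] at hp
  have hp' : p ≤ w.length := by omega
  have e1 : ∀ x : SLetter g, diaS h k (x :: w.drop p) = _ :=
    fun x => dia_hk_cons h k hh w p hp' x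
  simp only [e1]
  simp only [Finset.mul_sum, ← Finset.sum_sub_distrib]
  rw [Finset.sum_comm]
  refine Finset.sum_congr rfl fun r _ => ?_
  unfold Etri
  refine Finset.sum_congr rfl fun q _ => ?_
  refine Finset.sum_congr rfl fun j _ => ?_
  ring

lemma reindex_tri (n : ℕ) (E : ℕ → ℕ → ℚ) :
    ∑ i ∈ Finset.range (n + 1), ∑ p ∈ Finset.range (i + 1), E p i
      = ∑ p ∈ Finset.range (n + 1), ∑ r ∈ Finset.range (n - p + 1), E p (p + r) := by
  rw [Finset.sum_sigma', Finset.sum_sigma']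
  refine Finset.sum_nbij' (i := fun s => ⟨s.2, s.1 - s.2⟩) (j := fun s => ⟨s.1 + s.2, s.1⟩)
    ?_ ?_ ?_ ?_ ?_
  · rintro ⟨i, p⟩ hs
    simp only [Finset.mem_sigma, Finset.mem_range] at hs ⊢
    omega
  · rintro ⟨p, r⟩ ht
    simp only [Finset.mem_sigma, Finset.mem_range] at ht ⊢
    omega
  · rintro ⟨i, p⟩ hs
    simp only [Finset.mem_sigma, Finset.mem_range] at hs
    show (⟨p + (i - p), p⟩ : Σ _ : ℕ, ℕ) = ⟨i, p⟩
    rw [show p + (i - p) = i from by omega]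
  · rintro ⟨p, r⟩ ht
    show (⟨p, p + r - p⟩ : Σ _ : ℕ, ℕ) = ⟨p, r⟩
    rw [Nat.add_sub_cancel_left]
  · rintro ⟨i, p⟩ hs
    simp only [Finset.mem_sigma, Finset.mem_range] at hs
    show E p i = E p (p + (i - p))
    rw [show p + (i - p) = i from by omega]

/-- `-ω` is a two-sided unit for `⋄` on `T_{≥1}`, the restriction of `⋄` to `T_{≥2}` is
associative, and `⋄` maps `T_{≥l} × T_{≥m}` into `T_{≥l+m-2}`. -/
theorem statement18 (g : ℕ) :
    (∀ u : TS g, u [] = 0 → diaS (-omegaS g) u = u ∧ diaS u (-omegaS g) = u) ∧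
    (∀ f h k : TS g, degGES 2 f → degGES 2 h → degGES 2 k →
      diaS (diaS f h) k = diaS f (diaS h k)) ∧
    (∀ (l m : ℕ) (f h : TS g), degGES l f → degGES m h →
      degGES (l + m - 2) (diaS f h)) := by
  refine ⟨fun u hu => ⟨unit_left u hu, unit_right u hu⟩, fun f h k hf hh hk => ?_,
    fun l m f h hf hh => deg_dia l m f h hf hh⟩
  funext w
  rw [assoc_lhs f h k hh w, assoc_rhs f h k hh w, reindex_tri]
end
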